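/- Every 2×2 matrix M with nonnegative integer entries and determinant 1 can be written in exactly one way as a finite (possibly empty) product M = M₁ · M₂ · ⋯ · Mₙ with each Mᵢ ∈ {L₁, R₁}; that is, there is a unique finite list over {L₁, R₁} whose product is M. -/

import Mathlib

def L₁ : Matrix (Fin 2) (Fin 2) ℕ := !![1, 0; 1, 1]

def R₁ : Matrix (Fin 2) (Fin 2) ℕ := !![1, 1; 0, 1]

lemma e00 (a b c d : ℕ) : (!![a, b; c, d] : Matrix (Fin 2) (Fin 2) ℕ) 0 0 = a := by simp
lemma e01 (a b c d : ℕ) : (!![a, b; c, d] : Matrix (Fin 2) (Fin 2) ℕ) 0 1 = b := by simp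
lemma e10 (a b c d : ℕ) : (!![a, b; c, d] : Matrix (Fin 2) (Fin 2) ℕ) 1 0 = c := by simp
lemma e11 (a b c d : ℕ) : (!![a, b; c, d] : Matrix (Fin 2) (Fin 2) ℕ) 1 1 = d := by simp

lemma mk_eq {a b c d a' b' c' d' : ℕ} (h1 : a = a') (h2 : b = b') (h3 : c = c')
    (h4 : d = d') : (!![a, b; c, d] : Matrix (Fin 2) (Fin 2) ℕ) = !![a', b'; c', d'] := by
  subst h1; subst h2; subst h3; subst h4; rfl

lemma mat_entries {a b c d a' b' c' d' : ℕ}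
    (h : (!![a, b; c, d] : Matrix (Fin 2) (Fin 2) ℕ) = !![a', b'; c', d']) :
    a = a' ∧ b = b' ∧ c = c' ∧ d = d' := by
  refine ⟨?_, ?_, ?_, ?_⟩
  · simpa using congrFun (congrFun h 0) 0
  · simpa using congrFun (congrFun h 0) 1
  · simpa using congrFun (congrFun h 1) 0
  · simpa using congrFun (congrFun h 1) 1

lemma Lmul9 (P : Matrix (Fin 2) (Fin 2) ℕ) :
    L₁ * P = !![P 0 0, P 0 1; P 0 0 + P 1 0, P 0 1 + P 1 1] := by
  ext i j
  fin_cases i <;> fin_cases j <;>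
    simp [L₁, Matrix.mul_apply, Fin.sum_univ_two]

lemma Rmul9 (P : Matrix (Fin 2) (Fin 2) ℕ) :
    R₁ * P = !![P 0 0 + P 1 0, P 0 1 + P 1 1; P 1 0, P 1 1] := by
  ext i j
  fin_cases i <;> fin_cases j <;>
    simp [R₁, Matrix.mul_apply, Fin.sum_univ_two]

lemma ok_prod_pos (l : List (Matrix (Fin 2) (Fin 2) ℕ))
    (h : ∀ A ∈ l, A = L₁ ∨ A = R₁) :
    1 ≤ l.prod 0 0 ∧ 1 ≤ l.prod 1 1 := by
  induction l with
  | nil => simp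
  | cons A t ih =>
    have ht := ih (fun B hB => h B (List.mem_cons_of_mem _ hB))
    rcases h A List.mem_cons_self with rfl | rfl
    · rw [List.prod_cons, Lmul9, e00, e11]
      omega
    · rw [List.prod_cons, Rmul9, e00, e11]
      omega

lemma main_lemma : ∀ n : ℕ, ∀ a b c d : ℕ, a + b + c + d = n →
    (a : ℤ) * d - b * c = 1 →
    ∃! l : List (Matrix (Fin 2) (Fin 2) ℕ),
      (∀ A ∈ l, A = L₁ ∨ A = R₁) ∧ l.prod = !![a, b; c, d] := by
  intro n
  induction n using Nat.strong_induction_on with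
  | _ n IH =>
  intro a b c d hsum hdet
  have hab : 1 ≤ a + b := by
    by_contra h
    have ha : a = 0 := by omega
    have hb : b = 0 := by omega
    rw [ha, hb] at hdet; push_cast at hdet; omega
  have hcd : 1 ≤ c + d := by
    by_contra h
    have hc : c = 0 := by omega
    have hd : d = 0 := by omega
    rw [hc, hd] at hdet; push_cast at hdet; omega
  by_cases hL : a ≤ c ∧ b ≤ d
  · obtain ⟨h1, h2⟩ := hL
    have det' : (a : ℤ) * ((d - b : ℕ) : ℤ) - b * ((c - a : ℕ) : ℤ) = 1 := by
      push_cast [h1, h2]; ring_nf; linarith [hdet]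
    obtain ⟨l₀, ⟨hok₀, hprod₀⟩, huniq₀⟩ :=
      IH (a + b + (c - a) + (d - b)) (by omega) a b (c - a) (d - b) rfl det'
    have hLM : L₁ * !![a, b; c - a, d - b] = !![a, b; c, d] := by
      rw [Lmul9, e00, e01, e10, e11]
      exact mk_eq rfl rfl (by omega) (by omega)
    refine ⟨L₁ :: l₀, ⟨?_, ?_⟩, ?_⟩
    · intro A hA
      rcases List.mem_cons.1 hA with rfl | hA
      · exact Or.inl rfl
      · exact hok₀ A hA
    · rw [List.prod_cons, hprod₀, hLM]
    · rintro l ⟨hok, hprod⟩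
      cases l with
      | nil =>
        exfalso
        rw [List.prod_nil, Matrix.one_fin_two] at hprod
        obtain ⟨f1, _, f3, _⟩ := mat_entries hprod
        omega
      | cons A t =>
        have hokt : ∀ B ∈ t, B = L₁ ∨ B = R₁ := fun B hB => hok B (List.mem_cons_of_mem _ hB)
        rcases hok A List.mem_cons_self with rfl | rfl
        · rw [List.prod_cons, Lmul9] at hprod
          obtain ⟨f1, f2, f3, f4⟩ := mat_entries hprod
          have hP : t.prod = !![a, b; c - a, d - b] := by
            rw [Matrix.eta_fin_two t.prod]
            exact mk_eq (by omega) (by omega) (by omega) (by omega)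
          rw [huniq₀ t ⟨hokt, hP⟩]
        · exfalso
          rw [List.prod_cons, Rmul9] at hprod
          obtain ⟨f1, f2, f3, f4⟩ := mat_entries hprod
          obtain ⟨p1, p2⟩ := ok_prod_pos t hokt
          have hac : a = c := by omega
          have hbd : b = d := by omega
          rw [hac, hbd] at hdet
          nlinarith [hdet]
  · by_cases hR : c ≤ a ∧ d ≤ b
    · obtain ⟨h1, h2⟩ := hR
      have det' : ((a - c : ℕ) : ℤ) * d - ((b - d : ℕ) : ℤ) * c = 1 := by
        push_cast [h1, h2]; ring_nf; linarith [hdet]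
      obtain ⟨l₀, ⟨hok₀, hprod₀⟩, huniq₀⟩ :=
        IH ((a - c) + (b - d) + c + d) (by omega) (a - c) (b - d) c d rfl det'
      have hRM : R₁ * !![a - c, b - d; c, d] = !![a, b; c, d] := by
        rw [Rmul9, e00, e01, e10, e11]
        exact mk_eq (by omega) (by omega) rfl rfl
      refine ⟨R₁ :: l₀, ⟨?_, ?_⟩, ?_⟩
      · intro A hA
        rcases List.mem_cons.1 hA with rfl | hA
        · exact Or.inr rfl
        · exact hok₀ A hA
      · rw [List.prod_cons, hprod₀, hRM]
      · rintro l ⟨hok, hprod⟩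
        cases l with
        | nil =>
          exfalso
          rw [List.prod_nil, Matrix.one_fin_two] at hprod
          obtain ⟨_, f2, _, f4⟩ := mat_entries hprod
          omega
        | cons A t =>
          have hokt : ∀ B ∈ t, B = L₁ ∨ B = R₁ := fun B hB => hok B (List.mem_cons_of_mem _ hB)
          rcases hok A List.mem_cons_self with rfl | rfl
          · exfalso
            rw [List.prod_cons, Lmul9] at hprod
            obtain ⟨f1, f2, f3, f4⟩ := mat_entries hprod
            obtain ⟨p1, p2⟩ := ok_prod_pos t hokt
            have hac : a = c := by omega
            have hbd : b = d := by omega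
            rw [hac, hbd] at hdet
            nlinarith [hdet]
          · rw [List.prod_cons, Rmul9] at hprod
            obtain ⟨f1, f2, f3, f4⟩ := mat_entries hprod
            have hP : t.prod = !![a - c, b - d; c, d] := by
              rw [Matrix.eta_fin_two t.prod]
              exact mk_eq (by omega) (by omega) (by omega) (by omega)
            rw [huniq₀ t ⟨hokt, hP⟩]
    · -- leftover case: M must be the identity
      have hadbc : a * d = b * c + 1 := by
        have : (a : ℤ) * d = b * c + 1 := by linarith [hdet]
        exact_mod_cast this
      have hI : a = 1 ∧ b = 0 ∧ c = 0 ∧ d = 1 := by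
        rcases (not_and_or.1 hL) with g1 | g1 <;> rcases (not_and_or.1 hR) with g2 | g2
        · omega
        · -- c < a, b < d
          have h1' : c + 1 ≤ a := by omega
          have h2' : b + 1 ≤ d := by omega
          have hmul := Nat.mul_le_mul h1' h2'
          have key : b * c + b + c + 1 ≤ b * c + 1 := by nlinarith
          have hb : b = 0 := by omega
          have hc : c = 0 := by omega
          subst hb; subst hc
          simp at hadbc
          exact ⟨hadbc.1, rfl, rfl, hadbc.2⟩
        · -- a < c, d < b
          exfalso
          have h1' : a + 1 ≤ c := by omega
          have h2' : d + 1 ≤ b := by omega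
          have hmul := Nat.mul_le_mul h2' h1'
          nlinarith
        · omega
      obtain ⟨rfl, rfl, rfl, rfl⟩ := hI
      refine ⟨[], ⟨by simp, by rw [List.prod_nil, Matrix.one_fin_two]⟩, ?_⟩
      rintro l ⟨hok, hprod⟩
      cases l with
      | nil => rfl
      | cons A t =>
        exfalso
        have hokt : ∀ B ∈ t, B = L₁ ∨ B = R₁ := fun B hB => hok B (List.mem_cons_of_mem _ hB)
        obtain ⟨p1, p2⟩ := ok_prod_pos t hokt
        rcases hok A List.mem_cons_self with rfl | rfl
        · rw [List.prod_cons, Lmul9] at hprod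
          obtain ⟨_, _, f3, _⟩ := mat_entries hprod
          omega
        · rw [List.prod_cons, Rmul9] at hprod
          obtain ⟨_, f2, _, _⟩ := mat_entries hprod
          omega

theorem stmt_9 (M : Matrix (Fin 2) (Fin 2) ℕ)
    (hdet : (M 0 0 : ℤ) * M 1 1 - M 0 1 * M 1 0 = 1) :
    ∃! l : List (Matrix (Fin 2) (Fin 2) ℕ),
      (∀ A ∈ l, A = L₁ ∨ A = R₁) ∧ l.prod = M := by
  rw [Matrix.eta_fin_two M]
  exact main_lemma _ (M 0 0) (M 0 1) (M 1 0) (M 1 1) rfl hdet
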